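/- arXiv:1603.00122 — 3 statements merged into one kernel-verified Lean document; each statement's English description precedes it below -/
import Mathlib

section
/- Suppose b > μ > 0, p : {1,…,n} → ℝ is a probability distribution with p(i) > 0, and ⟨k⟩ = Σᵢ i·p(i). Define f(Ψ) = 1 - (1/⟨k⟩) Σᵢ b·i·p(i)/(μ + b·i·Ψ) for Ψ ∈ [0,1]. Then f is strictly increasing on [0,1], f(0) < 0, f(1) > 0, and hence f has a unique zero Ψ* in (0,1). -/
open Finset

theorem demographic_threshold (n : ℕ) (hn : 0 < n) (b μ : ℝ) (hμ : 0 < μ) (hbμ : μ < b)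
    (p : ℕ → ℝ) (hp : ∀ i ∈ Finset.Icc 1 n, 0 < p i)
    (hpsum : ∑ i ∈ Finset.Icc 1 n, p i = 1) :
    StrictMonoOn
      (fun Ψ : ℝ => 1 - (1 / ∑ i ∈ Finset.Icc 1 n, (i : ℝ) * p i) *
        ∑ i ∈ Finset.Icc 1 n, b * (i : ℝ) * p i / (μ + b * (i : ℝ) * Ψ))
      (Set.Icc 0 1) ∧
    (1 - (1 / ∑ i ∈ Finset.Icc 1 n, (i : ℝ) * p i) *
        ∑ i ∈ Finset.Icc 1 n, b * (i : ℝ) * p i / (μ + b * (i : ℝ) * 0)) < 0 ∧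
    0 < (1 - (1 / ∑ i ∈ Finset.Icc 1 n, (i : ℝ) * p i) *
        ∑ i ∈ Finset.Icc 1 n, b * (i : ℝ) * p i / (μ + b * (i : ℝ) * 1)) ∧
    (∃! Ψ : ℝ, Ψ ∈ Set.Ioo (0:ℝ) 1 ∧
      1 - (1 / ∑ i ∈ Finset.Icc 1 n, (i : ℝ) * p i) *
        ∑ i ∈ Finset.Icc 1 n, b * (i : ℝ) * p i / (μ + b * (i : ℝ) * Ψ) = 0) := by
  have hb : 0 < b := hμ.trans hbμ
  have hne : (Finset.Icc 1 n).Nonempty := ⟨1, Finset.mem_Icc.mpr ⟨le_rfl, hn⟩⟩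
  have hi1 : ∀ i ∈ Finset.Icc 1 n, (1:ℝ) ≤ (i:ℝ) := by
    intro i hi
    exact_mod_cast (Finset.mem_Icc.mp hi).1
  set K := ∑ i ∈ Finset.Icc 1 n, (i : ℝ) * p i with hKdef
  have hKpos : 0 < K :=
    Finset.sum_pos (fun i hi => mul_pos (lt_of_lt_of_le one_pos (hi1 i hi)) (hp i hi)) hne
  have hK1 : (1:ℝ) ≤ K := by
    rw [← hpsum]
    exact Finset.sum_le_sum fun i hi => le_mul_of_one_le_left (hp i hi).le (hi1 i hi)
  have hden : ∀ i ∈ Finset.Icc 1 n, ∀ Ψ : ℝ, Ψ ∈ Set.Icc (0:ℝ) 1 → 0 < μ + b * (i:ℝ) * Ψ := by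
    intro i hi Ψ hΨ
    have h0 : (0:ℝ) ≤ (i:ℝ) := le_trans zero_le_one (hi1 i hi)
    have : 0 ≤ b * (i:ℝ) * Ψ := mul_nonneg (mul_nonneg hb.le h0) hΨ.1
    linarith
  set f : ℝ → ℝ := fun Ψ =>
    1 - (1 / K) * ∑ i ∈ Finset.Icc 1 n, b * (i : ℝ) * p i / (μ + b * (i : ℝ) * Ψ) with hf
  have hmono : StrictMonoOn f (Set.Icc 0 1) := by
    intro x hx y hy hxy
    have hsum : ∑ i ∈ Finset.Icc 1 n, b * (i:ℝ) * p i / (μ + b * (i:ℝ) * y)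
        < ∑ i ∈ Finset.Icc 1 n, b * (i:ℝ) * p i / (μ + b * (i:ℝ) * x) := by
      apply Finset.sum_lt_sum_of_nonempty hne
      intro i hi
      have hipos : (0:ℝ) < (i:ℝ) := lt_of_lt_of_le one_pos (hi1 i hi)
      have hnum : 0 < b * (i:ℝ) * p i := mul_pos (mul_pos hb hipos) (hp i hi)
      have h1 : 0 < μ + b * (i:ℝ) * x := hden i hi x hx
      have h2 : μ + b * (i:ℝ) * x < μ + b * (i:ℝ) * y := by
        have hbi : 0 < b * (i:ℝ) := mul_pos hb hipos
        nlinarith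
      exact div_lt_div_of_pos_left hnum h1 h2
    simp only [hf]
    have := mul_lt_mul_of_pos_left hsum (by positivity : (0:ℝ) < 1/K)
    linarith
  have hf0 : f 0 < 0 := by
    have hS : ∑ i ∈ Finset.Icc 1 n, b * (i:ℝ) * p i / (μ + b * (i:ℝ) * 0) = (b/μ) * K := by
      rw [hKdef, Finset.mul_sum]
      apply Finset.sum_congr rfl
      intro i hi
      field_simp
      ring
    have hKne : K ≠ 0 := hKpos.ne'
    have hEq : (1 / K) * ((b/μ) * K) = b / μ := by field_simp
    simp only [hf, hS, hEq]
    rw [sub_neg]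
    exact (one_lt_div hμ).mpr hbμ
  have hf1 : 0 < f 1 := by
    have hS1 : ∑ i ∈ Finset.Icc 1 n, b * (i:ℝ) * p i / (μ + b * (i:ℝ) * 1) < K := by
      have h1 : ∑ i ∈ Finset.Icc 1 n, b * (i:ℝ) * p i / (μ + b * (i:ℝ) * 1)
          < ∑ i ∈ Finset.Icc 1 n, p i := by
        apply Finset.sum_lt_sum_of_nonempty hne
        intro i hi
        rw [div_lt_iff₀ (hden i hi 1 ⟨zero_le_one, le_refl 1⟩)]
        nlinarith [mul_pos (hp i hi) hμ]
      rw [hpsum] at h1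
      exact lt_of_lt_of_le h1 hK1
    have := mul_lt_mul_of_pos_left hS1 (by positivity : (0:ℝ) < 1/K)
    rw [one_div, inv_mul_cancel₀ hKpos.ne'] at this
    simp only [hf, one_div]
    linarith
  have hcont : ContinuousOn f (Set.Icc 0 1) := by
    apply ContinuousOn.sub continuousOn_const
    apply ContinuousOn.mul continuousOn_const
    apply continuousOn_finset_sum
    intro i hi
    apply ContinuousOn.div continuousOn_const
    · fun_prop
    · intro Ψ hΨ
      exact (hden i hi Ψ hΨ).ne'
  have hsub : Set.Ioo (f 0) (f 1) ⊆ f '' Set.Ioo 0 1 := intermediate_value_Ioo zero_le_one hcont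
  obtain ⟨Ψ, hΨmem, hΨeq⟩ := hsub ⟨hf0, hf1⟩
  refine ⟨hmono, hf0, hf1, ⟨Ψ, ⟨hΨmem, hΨeq⟩, ?_⟩⟩
  rintro y ⟨hy, hyeq⟩
  have hIoo : Set.Ioo (0:ℝ) 1 ⊆ Set.Icc 0 1 := Set.Ioo_subset_Icc_self
  have hyeq' : f y = 0 := hyeq
  exact hmono.injOn (hIoo hy) (hIoo hΨmem) (by rw [hyeq', hΨeq])
end

section
/- Suppose 0 < b ≤ μ, p : {1,…,n} → ℝ is a probability distribution with p(i)>0, and f(Ψ) = 1 - (1/⟨k⟩) Σᵢ b·i·p(i)/(μ + b·i·Ψ). Then f(Ψ) > 0 for all Ψ ∈ (0,1]; in particular f has no zero in (0,1]. -/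
theorem extinction_no_positive_equilibrium (n : ℕ) (hn : 0 < n) (b μ : ℝ)
    (hb : 0 < b) (hbμ : b ≤ μ)
    (p : ℕ → ℝ) (hp : ∀ i ∈ Finset.Icc 1 n, 0 < p i)
    (hpsum : ∑ i ∈ Finset.Icc 1 n, p i = 1) :
    ∀ Ψ ∈ Set.Ioc (0:ℝ) 1,
      0 < 1 - (1 / ∑ i ∈ Finset.Icc 1 n, (i : ℝ) * p i) *
        ∑ i ∈ Finset.Icc 1 n, b * (i : ℝ) * p i / (μ + b * (i : ℝ) * Ψ) := by
  intro Ψ hΨ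
  obtain ⟨hΨ0, hΨ1⟩ := hΨ
  have hne : (Finset.Icc 1 n).Nonempty := Finset.nonempty_Icc.mpr hn
  have hipos : ∀ i ∈ Finset.Icc 1 n, (0:ℝ) < i * p i := by
    intro i hi
    have h1 : 1 ≤ i := (Finset.mem_Icc.mp hi).1
    exact mul_pos (by exact_mod_cast Nat.lt_of_lt_of_le Nat.zero_lt_one h1)
      (hp i hi)
  have hS : 0 < ∑ i ∈ Finset.Icc 1 n, (i : ℝ) * p i :=
    Finset.sum_pos hipos hne
  have hlt : ∑ i ∈ Finset.Icc 1 n, b * (i : ℝ) * p i / (μ + b * (i : ℝ) * Ψ)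
      < ∑ i ∈ Finset.Icc 1 n, (i : ℝ) * p i := by
    apply Finset.sum_lt_sum_of_nonempty hne
    intro i hi
    have h1 : 1 ≤ i := (Finset.mem_Icc.mp hi).1
    have hi0 : (0:ℝ) < i := by exact_mod_cast Nat.lt_of_lt_of_le Nat.zero_lt_one h1
    have hd : 0 < μ + b * (i : ℝ) * Ψ := by
      have : 0 < b * (i : ℝ) * Ψ := by positivity
      linarith
    rw [div_lt_iff₀ hd]
    have hbd : b < μ + b * (i : ℝ) * Ψ := by
      have : 0 < b * (i : ℝ) * Ψ := by positivity
      linarith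
    have hip : 0 < (i : ℝ) * p i := hipos i hi
    calc b * (i : ℝ) * p i = ((i : ℝ) * p i) * b := by ring
      _ < ((i : ℝ) * p i) * (μ + b * (i : ℝ) * Ψ) :=
        (mul_lt_mul_iff_right₀ hip).mpr hbd
  have := (mul_lt_mul_iff_right₀ (one_div_pos.mpr hS)).mpr hlt
  rw [one_div_mul_cancel (ne_of_gt hS)] at this
  linarith
end

section
/- Let λ ∈ ℂ with Re λ ≥ 0, and K₂(λ) = ∫₀^∞ γ(τ) e^{-λτ} e^{-μτ - ∫₀^τ γ(ξ)dξ} dτ with μ > 0 and γ ≥ 0 integrable. Then |K₂(λ)| < 1, so in particular K₂(λ) ≠ 1 + (λ+μ)/(i·b·c) for any i ∈ {1,…,n} and real b, c > 0 when λ ≥ 0 is real (since the right side is ≥ 1). -/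
open MeasureTheory Set Filter

private lemma exp_int (a : ℝ) : IntegrableOn (fun s => Real.exp (-s)) (Set.Ioi a) := by
  simpa using exp_neg_integrableOn_Ioi a one_pos

private lemma int_s_exp : ∫ s in Set.Ioi (0:ℝ), Real.exp (-s) * s = 1 := by
  have h2 : Real.Gamma 2 = 1 := by simpa using Real.Gamma_nat_eq_factorial 1
  rw [Real.Gamma_eq_integral two_pos] at h2
  have hpt : ∀ x : ℝ, Real.exp (-x) * x ^ ((2:ℝ) - 1) = Real.exp (-x) * x := by
    intro x; norm_num
  rw [← h2]
  exact setIntegral_congr_fun measurableSet_Ioi (fun x _ => (hpt x).symm)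

private lemma s_exp_int : IntegrableOn (fun s => Real.exp (-s) * s) (Set.Ioi (0:ℝ)) := by
  have := Real.GammaIntegral_convergent (s := 2) two_pos
  apply this.congr_fun ?_ measurableSet_Ioi
  intro x _; norm_num

/-- Core layer-cake bound: `∫_{Ioi 0} γ e^{-Γ} ≤ 1`. -/
private lemma core_le_one (γ₁ : ℝ → ℝ) (hm : Measurable γ₁) (h0 : ∀ τ, 0 ≤ γ₁ τ)
    (hint : Integrable γ₁) :
    ∫ τ in Set.Ioi (0:ℝ), γ₁ τ * Real.exp (-(∫ ξ in (0:ℝ)..τ, γ₁ ξ)) ≤ 1 := by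
  set G : ℝ → ℝ := fun τ => ∫ ξ in (0:ℝ)..τ, γ₁ ξ with hGdef
  have hGc : Continuous G := hint.continuous_primitive 0
  have hGval : ∀ t : ℝ, 0 ≤ t → G t = ∫ τ in Set.Ioc 0 t, γ₁ τ := fun t ht =>
    intervalIntegral.integral_of_le ht
  have hG0 : ∀ τ, 0 ≤ τ → 0 ≤ G τ := fun τ hτ =>
    intervalIntegral.integral_nonneg hτ (fun x _ => h0 x)
  -- key measure bound
  have key : ∀ s : ℝ, (volume.withDensity (fun τ => ENNReal.ofReal (γ₁ τ)))
      {τ : ℝ | 0 < τ ∧ G τ < s} ≤ ENNReal.ofReal s := by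
    intro s
    set μ' := volume.withDensity (fun τ => ENNReal.ofReal (γ₁ τ)) with hμ'
    set S := {τ : ℝ | 0 < τ ∧ G τ < s} with hS
    have hbound : ∀ n : ℕ, μ' (S ∩ Set.Iic (n:ℝ)) ≤ ENNReal.ofReal s := by
      intro n
      rcases (S ∩ Set.Iic (n:ℝ)).eq_empty_or_nonempty with hE | hE
      · rw [hE]; simp
      · set E := S ∩ Set.Iic (n:ℝ) with hEdef
        have hbdd : BddAbove E := ⟨n, fun x hx => hx.2⟩
        set t := sSup E with ht
        obtain ⟨e, he⟩ := hE
        have ht0 : 0 < t := lt_of_lt_of_le he.1.1 (le_csSup hbdd he)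
        have hEt : E ⊆ Set.Ioc 0 t := fun x hx => ⟨hx.1.1, le_csSup hbdd hx⟩
        have hGt : G t ≤ s := by
          by_contra hlt
          push_neg at hlt
          have hev : ∀ᶠ x in nhds t, s < G x :=
            (hGc.tendsto t).eventually (eventually_gt_nhds hlt)
          rw [Metric.eventually_nhds_iff] at hev
          obtain ⟨δ, δpos, hδ⟩ := hev
          obtain ⟨e', he'E, he'⟩ := exists_lt_of_lt_csSup ⟨e, he⟩ (by linarith : t - δ < t)
          have hle : e' ≤ t := le_csSup hbdd he'E
          have : s < G e' := hδ (by rw [Real.dist_eq, abs_lt]; constructor <;> linarith)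
          exact absurd he'E.1.2 (not_lt.2 this.le)
        calc μ' E ≤ μ' (Set.Ioc 0 t) := measure_mono hEt
          _ = ∫⁻ τ in Set.Ioc 0 t, ENNReal.ofReal (γ₁ τ) :=
              withDensity_apply _ measurableSet_Ioc
          _ = ENNReal.ofReal (∫ τ in Set.Ioc 0 t, γ₁ τ) :=
              (ofReal_integral_eq_lintegral_ofReal hint.integrableOn
                (Filter.Eventually.of_forall fun x => h0 x)).symm
          _ ≤ ENNReal.ofReal s := ENNReal.ofReal_le_ofReal (by rw [← hGval t ht0.le]; exact hGt)
    have hU : S = ⋃ n : ℕ, S ∩ Set.Iic (n:ℝ) := by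
      ext x
      simp only [Set.mem_iUnion, Set.mem_inter_iff, Set.mem_Iic]
      constructor
      · intro hx
        obtain ⟨n, hn⟩ := exists_nat_ge x
        exact ⟨n, hx, hn⟩
      · rintro ⟨n, hx, -⟩; exact hx
    have hdir : Directed (· ⊆ ·) (fun n : ℕ => S ∩ Set.Iic (n:ℝ)) := by
      apply Monotone.directed_le
      intro a b hab
      exact Set.inter_subset_inter_right _ (Set.Iic_subset_Iic.2 (by exact_mod_cast hab))
    rw [hU, hdir.measure_iUnion]
    exact iSup_le hbound
  -- lintegral bound via Tonelli
  have hlin : ∫⁻ τ in Set.Ioi (0:ℝ), ENNReal.ofReal (γ₁ τ * Real.exp (-(G τ))) ≤ 1 := by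
    set g : ℝ → ENNReal := fun s => ENNReal.ofReal (Real.exp (-s)) with hg
    set F : ℝ → ℝ → ENNReal := fun τ s => ENNReal.ofReal (γ₁ τ) * ((Set.Ioi (G τ)).indicator g s)
      with hF
    have hgm : Measurable g :=
      ENNReal.measurable_ofReal.comp (Real.measurable_exp.comp measurable_neg)
    have stepA : ∀ τ ∈ Set.Ioi (0:ℝ),
        ENNReal.ofReal (γ₁ τ * Real.exp (-(G τ))) = ∫⁻ s in Set.Ioi (0:ℝ), F τ s := by
      intro τ hτ
      have h1 : ∫⁻ s in Set.Ioi (0:ℝ), F τ s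
          = ENNReal.ofReal (γ₁ τ) * ∫⁻ s in Set.Ioi (0:ℝ), (Set.Ioi (G τ)).indicator g s :=
        lintegral_const_mul' _ _ ENNReal.ofReal_ne_top
      have h2 : ∫⁻ s in Set.Ioi (0:ℝ), (Set.Ioi (G τ)).indicator g s
          = ∫⁻ s in Set.Ioi (G τ), g s := by
        rw [lintegral_indicator measurableSet_Ioi, Measure.restrict_restrict measurableSet_Ioi,
          Set.inter_eq_self_of_subset_left (Set.Ioi_subset_Ioi (hG0 τ (le_of_lt hτ)))]
      have h3 : ∫⁻ s in Set.Ioi (G τ), g s = ENNReal.ofReal (Real.exp (-(G τ))) := by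
        rw [← ofReal_integral_eq_lintegral_ofReal (exp_int (G τ))
          (Filter.Eventually.of_forall fun x => (Real.exp_pos _).le), integral_exp_neg_Ioi]
      rw [h1, h2, h3, ENNReal.ofReal_mul (h0 τ)]
    rw [setLIntegral_congr_fun measurableSet_Ioi stepA]
    have hswap : ∫⁻ τ in Set.Ioi (0:ℝ), ∫⁻ s in Set.Ioi (0:ℝ), F τ s
        = ∫⁻ s in Set.Ioi (0:ℝ), ∫⁻ τ in Set.Ioi (0:ℝ), F τ s := by
      apply lintegral_lintegral_swap
      have hset : MeasurableSet {p : ℝ × ℝ | G p.1 < p.2} :=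
        measurableSet_lt ((hGc.measurable).comp measurable_fst) measurable_snd
      have huncurry : Function.uncurry F = fun p : ℝ × ℝ =>
          (ENNReal.ofReal (γ₁ p.1)) * ({p : ℝ × ℝ | G p.1 < p.2}.indicator (fun q => g q.2) p) := by
        funext p
        simp only [Function.uncurry, hF, Set.indicator_apply, Set.mem_Ioi, Set.mem_setOf_eq]
      rw [huncurry]
      exact ((ENNReal.measurable_ofReal.comp (hm.comp measurable_fst)).mul
        ((hgm.comp measurable_snd).indicator hset)).aemeasurable
    rw [hswap]
    have stepC : ∀ s ∈ Set.Ioi (0:ℝ), ∫⁻ τ in Set.Ioi (0:ℝ), F τ s ≤ g s * ENNReal.ofReal s := by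
      intro s _
      set S := {τ : ℝ | 0 < τ ∧ G τ < s} with hS
      have hSm : MeasurableSet S := by
        have : S = Set.Ioi 0 ∩ G ⁻¹' (Set.Iio s) := by
          ext x; simp [hS, Set.mem_Ioi, Set.mem_Iio]
        rw [this]
        exact measurableSet_Ioi.inter (hGc.measurable measurableSet_Iio)
      have heq : ∀ τ ∈ Set.Ioi (0:ℝ),
          F τ s = S.indicator (fun τ => ENNReal.ofReal (γ₁ τ) * g s) τ := by
        intro τ hτ
        by_cases hGs : G τ < s
        · have h1 : s ∈ Set.Ioi (G τ) := hGs
          have h2 : τ ∈ S := ⟨hτ, hGs⟩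
          simp [hF, Set.indicator_of_mem h1, Set.indicator_of_mem h2]
        · have h1 : s ∉ Set.Ioi (G τ) := by simpa using not_lt.1 hGs
          have h2 : τ ∉ S := fun h => hGs h.2
          simp [hF, Set.indicator_of_notMem h1, Set.indicator_of_notMem h2]
      rw [setLIntegral_congr_fun measurableSet_Ioi heq,
        lintegral_indicator hSm, Measure.restrict_restrict hSm,
        show S ∩ Set.Ioi 0 = S from Set.inter_eq_self_of_subset_left (fun x hx => hx.1),
        lintegral_mul_const' _ _ ENNReal.ofReal_ne_top, ← withDensity_apply _ hSm]
      rw [mul_comm (g s)]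
      exact mul_le_mul_left (key s) (g s)
    calc ∫⁻ s in Set.Ioi (0:ℝ), ∫⁻ τ in Set.Ioi (0:ℝ), F τ s
        ≤ ∫⁻ s in Set.Ioi (0:ℝ), g s * ENNReal.ofReal s := by
          apply setLIntegral_mono_ae ?_ (Filter.Eventually.of_forall stepC)
          exact (hgm.mul ENNReal.measurable_ofReal).aemeasurable
      _ = ∫⁻ s in Set.Ioi (0:ℝ), ENNReal.ofReal (Real.exp (-s) * s) := by
          apply setLIntegral_congr_fun measurableSet_Ioi
          exact fun s hs =>
            (ENNReal.ofReal_mul (Real.exp_pos _).le).symm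
      _ = ENNReal.ofReal (∫ s in Set.Ioi (0:ℝ), Real.exp (-s) * s) :=
          (ofReal_integral_eq_lintegral_ofReal s_exp_int
            ((ae_restrict_iff' measurableSet_Ioi).2 (Filter.Eventually.of_forall
              fun s hs => mul_nonneg (Real.exp_pos _).le (le_of_lt hs)))).symm
      _ = 1 := by rw [int_s_exp]; simp
  -- convert back to Bochner integral
  have hnn : 0 ≤ᵐ[volume.restrict (Set.Ioi (0:ℝ))] fun τ => γ₁ τ * Real.exp (-(G τ)) :=
    Filter.Eventually.of_forall fun τ => mul_nonneg (h0 τ) (Real.exp_pos _).le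
  have hmeas : AEStronglyMeasurable (fun τ => γ₁ τ * Real.exp (-(G τ)))
      (volume.restrict (Set.Ioi (0:ℝ))) :=
    (hm.mul (Real.measurable_exp.comp hGc.neg.measurable)).aestronglyMeasurable
  rw [integral_eq_lintegral_of_nonneg_ae hnn hmeas]
  calc (∫⁻ τ in Set.Ioi (0:ℝ), ENNReal.ofReal (γ₁ τ * Real.exp (-(G τ)))).toReal
      ≤ (1 : ENNReal).toReal := ENNReal.toReal_mono (by simp) hlin
    _ = 1 := by simp

private lemma f_int (μ : ℝ) (hμ : 0 < μ) (γ₁ : ℝ → ℝ) (hm : Measurable γ₁)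
    (h0 : ∀ τ, 0 ≤ γ₁ τ) (hint : Integrable γ₁) :
    IntegrableOn (fun τ => γ₁ τ * Real.exp (-μ * τ - ∫ ξ in (0:ℝ)..τ, γ₁ ξ))
      (Set.Ioi (0:ℝ)) := by
  set G : ℝ → ℝ := fun τ => ∫ ξ in (0:ℝ)..τ, γ₁ ξ with hGdef
  have hGc : Continuous G := hint.continuous_primitive 0
  have hG0 : ∀ τ, 0 ≤ τ → 0 ≤ G τ := fun τ hτ =>
    intervalIntegral.integral_nonneg hτ (fun x _ => h0 x)
  have hfc : Continuous fun τ => Real.exp (-μ * τ - G τ) :=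
    Real.continuous_exp.comp ((continuous_const.mul continuous_id).sub hGc)
  have hfm : Measurable fun τ => γ₁ τ * Real.exp (-μ * τ - G τ) := hm.mul hfc.measurable
  apply Integrable.mono' hint.integrableOn hfm.aestronglyMeasurable.restrict
  refine (ae_restrict_iff' measurableSet_Ioi).2 (Filter.Eventually.of_forall fun τ hτ => ?_)
  have hτ0 : (0:ℝ) < τ := hτ
  have hexp : Real.exp (-μ * τ - G τ) ≤ 1 := by
    rw [Real.exp_le_one_iff]
    nlinarith [hG0 τ hτ0.le]
  simp only [Real.norm_eq_abs, abs_mul, abs_of_nonneg (h0 τ),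
    abs_of_nonneg (Real.exp_pos (-μ * τ - G τ)).le]
  nlinarith [h0 τ, Real.exp_pos (-μ * τ - G τ)]


private lemma core_strict (μ : ℝ) (hμ : 0 < μ) (γ₁ : ℝ → ℝ) (hm : Measurable γ₁)
    (h0 : ∀ τ, 0 ≤ γ₁ τ) (hint : Integrable γ₁) :
    ∫ τ in Set.Ioi (0:ℝ), γ₁ τ * Real.exp (-μ * τ - ∫ ξ in (0:ℝ)..τ, γ₁ ξ) < 1 := by
  set G : ℝ → ℝ := fun τ => ∫ ξ in (0:ℝ)..τ, γ₁ ξ with hGdef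
  have hGc : Continuous G := hint.continuous_primitive 0
  have hG0 : ∀ τ, 0 ≤ τ → 0 ≤ G τ := fun τ hτ =>
    intervalIntegral.integral_nonneg hτ (fun x _ => h0 x)
  set f : ℝ → ℝ := fun τ => γ₁ τ * Real.exp (-μ * τ - G τ) with hfdef
  set h : ℝ → ℝ := fun τ => γ₁ τ * Real.exp (-(G τ)) with hhdef
  have hfc : Continuous fun τ => Real.exp (-μ * τ - G τ) :=
    Real.continuous_exp.comp ((continuous_const.mul continuous_id).sub hGc)
  have hhc : Continuous fun τ => Real.exp (-(G τ)) := Real.continuous_exp.comp hGc.neg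
  have hfm : Measurable f := hm.mul hfc.measurable
  have hhm : Measurable h := hm.mul hhc.measurable
  have hfint : IntegrableOn f (Set.Ioi (0:ℝ)) := by
    apply Integrable.mono' hint.integrableOn hfm.aestronglyMeasurable.restrict
    refine (ae_restrict_iff' measurableSet_Ioi).2 (Filter.Eventually.of_forall fun τ hτ => ?_)
    have hτ0 : (0:ℝ) < τ := hτ
    have hexp : Real.exp (-μ * τ - G τ) ≤ 1 := by
      rw [Real.exp_le_one_iff]
      nlinarith [hG0 τ hτ0.le]
    rw [hfdef]
    simp only [Real.norm_eq_abs, abs_mul, abs_of_nonneg (h0 τ),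
      abs_of_nonneg (Real.exp_pos (-μ * τ - G τ)).le]
    nlinarith [h0 τ, Real.exp_pos (-μ * τ - G τ)]
  have hhint : IntegrableOn h (Set.Ioi (0:ℝ)) := by
    apply Integrable.mono' hint.integrableOn hhm.aestronglyMeasurable.restrict
    refine (ae_restrict_iff' measurableSet_Ioi).2 (Filter.Eventually.of_forall fun τ hτ => ?_)
    have hτ0 : (0:ℝ) < τ := hτ
    have hexp : Real.exp (-(G τ)) ≤ 1 := by
      rw [Real.exp_le_one_iff]; linarith [hG0 τ hτ0.le]
    rw [hhdef]
    simp only [Real.norm_eq_abs, abs_mul, abs_of_nonneg (h0 τ),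
      abs_of_nonneg (Real.exp_pos (-(G τ))).le]
    nlinarith [h0 τ, Real.exp_pos (-(G τ))]
  have hd0 : ∀ τ ∈ Set.Ioi (0:ℝ), 0 ≤ h τ - f τ := by
    intro τ hτ
    have hτ0 : (0:ℝ) < τ := hτ
    have : Real.exp (-μ * τ - G τ) ≤ Real.exp (-(G τ)) :=
      Real.exp_le_exp.2 (by nlinarith)
    simp only [hfdef, hhdef]
    nlinarith [h0 τ]
  have hcore : ∫ τ in Set.Ioi (0:ℝ), h τ ≤ 1 := core_le_one γ₁ hm h0 hint
  by_cases hc : ∫ τ in Set.Ioi (0:ℝ), (h τ - f τ) = 0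
  · have hae : (fun τ => h τ - f τ) =ᵐ[volume.restrict (Set.Ioi (0:ℝ))] 0 :=
      (integral_eq_zero_iff_of_nonneg_ae
        ((ae_restrict_iff' measurableSet_Ioi).2 (Filter.Eventually.of_forall hd0))
        (hhint.sub hfint)).1 hc
    have hfae : f =ᵐ[volume.restrict (Set.Ioi (0:ℝ))] 0 := by
      filter_upwards [hae, ae_restrict_mem measurableSet_Ioi] with τ h1 h2
      have hτ0 : (0:ℝ) < τ := h2
      have hlt : Real.exp (-μ * τ - G τ) < Real.exp (-(G τ)) :=
        Real.exp_lt_exp.2 (by nlinarith)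
      have h1' : γ₁ τ * (Real.exp (-(G τ)) - Real.exp (-μ * τ - G τ)) = 0 := by
        simp only [hfdef, hhdef, Pi.zero_apply] at h1 ⊢
        nlinarith [h1]
      have hγ0 : γ₁ τ = 0 := by
        rcases mul_eq_zero.1 h1' with hz | hz
        · exact hz
        · nlinarith
      simp [hfdef, hγ0]
    rw [integral_congr_ae hfae]
    simp
  · have hdpos : 0 < ∫ τ in Set.Ioi (0:ℝ), (h τ - f τ) :=
      lt_of_le_of_ne (setIntegral_nonneg measurableSet_Ioi hd0) (Ne.symm hc)
    have hsub : ∫ τ in Set.Ioi (0:ℝ), (h τ - f τ)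
        = (∫ τ in Set.Ioi (0:ℝ), h τ) - ∫ τ in Set.Ioi (0:ℝ), f τ :=
      integral_sub hhint hfint
    linarith



theorem K2_abs_lt_one (μ : ℝ) (hμ : 0 < μ) (γ : ℝ → ℝ)
    (hγ0 : ∀ τ, 0 ≤ τ → 0 ≤ γ τ)
    (hγint : IntegrableOn γ (Set.Ioi 0)) :
    (∀ lam : ℂ, 0 ≤ lam.re →
      ‖(∫ τ in Set.Ioi (0:ℝ),
        (γ τ * Real.exp (-μ * τ - ∫ ξ in (0:ℝ)..τ, γ ξ) : ℝ) *
          Complex.exp (-lam * τ))‖ < 1) ∧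
    ∀ lam : ℝ, 0 ≤ lam → ∀ n : ℕ, ∀ i ∈ Finset.Icc 1 n, ∀ b c : ℝ, 0 < b → 0 < c →
      (∫ τ in Set.Ioi (0:ℝ),
        γ τ * Real.exp (-μ * τ - ∫ ξ in (0:ℝ)..τ, γ ξ) * Real.exp (-lam * τ))
        ≠ 1 + (lam + μ) / ((i : ℝ) * b * c) := by
  -- build a measurable, everywhere-nonnegative representative of γ on `Ioi 0`
  have hg0meas : AEStronglyMeasurable ((Set.Ioi (0:ℝ)).indicator γ) volume :=
    (aestronglyMeasurable_indicator_iff measurableSet_Ioi).2 hγint.1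
  set γ₁ : ℝ → ℝ := fun τ => max 0 ((Set.Ioi (0:ℝ)).indicator (hg0meas.mk _) τ) with hγ₁def
  have hm1 : Measurable γ₁ :=
    measurable_const.max ((hg0meas.stronglyMeasurable_mk.measurable).indicator measurableSet_Ioi)
  have h0' : ∀ τ, 0 ≤ γ₁ τ := fun τ => le_max_left _ _
  have hae : γ₁ =ᵐ[volume] (Set.Ioi (0:ℝ)).indicator γ := by
    filter_upwards [hg0meas.ae_eq_mk] with τ hτ
    show max 0 ((Set.Ioi (0:ℝ)).indicator (hg0meas.mk _) τ) = (Set.Ioi (0:ℝ)).indicator γ τ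
    by_cases hmem : τ ∈ Set.Ioi (0:ℝ)
    · rw [Set.indicator_of_mem hmem, ← hτ, Set.indicator_of_mem hmem,
        max_eq_right (hγ0 τ (le_of_lt hmem))]
    · rw [Set.indicator_of_notMem hmem, Set.indicator_of_notMem hmem, max_self]
  have hint1 : Integrable γ₁ :=
    ((integrable_indicator_iff measurableSet_Ioi).2 hγint).congr hae.symm
  have hres : ∀ᵐ τ ∂(volume.restrict (Set.Ioi (0:ℝ))), γ τ = γ₁ τ := by
    filter_upwards [ae_restrict_of_ae hae, ae_restrict_mem measurableSet_Ioi] with τ h1 h2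
    rw [h1, Set.indicator_of_mem h2]
  have hΓeq : ∀ τ ∈ Set.Ioi (0:ℝ),
      (∫ ξ in (0:ℝ)..τ, γ ξ) = ∫ ξ in (0:ℝ)..τ, γ₁ ξ := by
    intro τ hτ
    rw [intervalIntegral.integral_of_le (le_of_lt hτ),
      intervalIntegral.integral_of_le (le_of_lt hτ)]
    apply setIntegral_congr_ae measurableSet_Ioc
    filter_upwards [hae] with ξ hξ hmem
    rw [hξ, Set.indicator_of_mem (show ξ ∈ Set.Ioi (0:ℝ) from hmem.1)]
  have part1 : ∀ lam : ℂ, 0 ≤ lam.re →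
      ‖(∫ τ in Set.Ioi (0:ℝ),
        (γ τ * Real.exp (-μ * τ - ∫ ξ in (0:ℝ)..τ, γ ξ) : ℝ) *
          Complex.exp (-lam * τ))‖ < 1 := by
    intro lam hlam
    have hb1 : ‖(∫ τ in Set.Ioi (0:ℝ),
        (γ τ * Real.exp (-μ * τ - ∫ ξ in (0:ℝ)..τ, γ ξ) : ℝ) * Complex.exp (-lam * τ))‖
        ≤ ∫ τ in Set.Ioi (0:ℝ),
          ‖((γ τ * Real.exp (-μ * τ - ∫ ξ in (0:ℝ)..τ, γ ξ) : ℝ) : ℂ) * Complex.exp (-lam * τ)‖ := by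
      exact norm_integral_le_integral_norm _
    have hb2 : ∫ τ in Set.Ioi (0:ℝ),
          ‖((γ τ * Real.exp (-μ * τ - ∫ ξ in (0:ℝ)..τ, γ ξ) : ℝ) : ℂ) * Complex.exp (-lam * τ)‖
        ≤ ∫ τ in Set.Ioi (0:ℝ), γ₁ τ * Real.exp (-μ * τ - ∫ ξ in (0:ℝ)..τ, γ₁ ξ) := by
      apply integral_mono_of_nonneg (Filter.Eventually.of_forall fun τ => norm_nonneg _)
        (f_int μ hμ γ₁ hm1 h0' hint1)
      filter_upwards [hres, ae_restrict_mem measurableSet_Ioi] with τ h1 h2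
      have hτ0 : (0:ℝ) < τ := h2
      have hr : (0:ℝ) ≤ γ τ * Real.exp (-μ * τ - ∫ ξ in (0:ℝ)..τ, γ ξ) :=
        mul_nonneg (hγ0 τ hτ0.le) (Real.exp_pos _).le
      have hnorm : ‖Complex.exp (-lam * τ)‖ ≤ 1 := by
        rw [Complex.norm_exp]
        rw [Real.exp_le_one_iff]
        have : (-lam * (τ:ℂ)).re = -lam.re * τ := by
          simp [Complex.mul_re]
        rw [this]
        nlinarith
      calc ‖((γ τ * Real.exp (-μ * τ - ∫ ξ in (0:ℝ)..τ, γ ξ) : ℝ) : ℂ) * Complex.exp (-lam * τ)‖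
          = ‖((γ τ * Real.exp (-μ * τ - ∫ ξ in (0:ℝ)..τ, γ ξ) : ℝ) : ℂ)‖ * ‖Complex.exp (-lam * τ)‖ :=
            norm_mul _ _
        _ ≤ ‖((γ τ * Real.exp (-μ * τ - ∫ ξ in (0:ℝ)..τ, γ ξ) : ℝ) : ℂ)‖ * 1 :=
            mul_le_mul_of_nonneg_left hnorm (norm_nonneg _)
        _ = γ τ * Real.exp (-μ * τ - ∫ ξ in (0:ℝ)..τ, γ ξ) := by
            rw [mul_one, Complex.norm_real, Real.norm_eq_abs, abs_of_nonneg hr]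
        _ = γ₁ τ * Real.exp (-μ * τ - ∫ ξ in (0:ℝ)..τ, γ₁ ξ) := by
            rw [h1, hΓeq τ h2]
    exact lt_of_le_of_lt (hb1.trans hb2) (core_strict μ hμ γ₁ hm1 h0' hint1)
  refine ⟨part1, ?_⟩
  intro lam hlam n i hi b c hb hc
  set R := ∫ τ in Set.Ioi (0:ℝ),
      γ τ * Real.exp (-μ * τ - ∫ ξ in (0:ℝ)..τ, γ ξ) * Real.exp (-lam * τ) with hR
  have hcast : (∫ τ in Set.Ioi (0:ℝ),
      (γ τ * Real.exp (-μ * τ - ∫ ξ in (0:ℝ)..τ, γ ξ) : ℝ) *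
        Complex.exp (-(lam:ℂ) * τ)) = (R : ℂ) := by
    have h1 : (∫ τ in Set.Ioi (0:ℝ),
        (γ τ * Real.exp (-μ * τ - ∫ ξ in (0:ℝ)..τ, γ ξ) : ℝ) *
          Complex.exp (-(lam:ℂ) * τ))
        = ∫ τ in Set.Ioi (0:ℝ),
          ((γ τ * Real.exp (-μ * τ - ∫ ξ in (0:ℝ)..τ, γ ξ) * Real.exp (-lam * τ) : ℝ) : ℂ) := by
      apply integral_congr_ae
      apply Filter.Eventually.of_forall
      intro τ
      push_cast [Complex.ofReal_exp]
      ring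
    rw [hR, h1]
    exact integral_ofReal
  have habs := part1 (lam : ℂ) (by simpa using hlam)
  rw [hcast, Complex.norm_real, Real.norm_eq_abs] at habs
  have hRlt : R < 1 := lt_of_le_of_lt (le_abs_self R) habs
  have hi1 : (1:ℝ) ≤ (i:ℝ) := by exact_mod_cast (Finset.mem_Icc.1 hi).1
  have hpos : 0 < (lam + μ) / ((i : ℝ) * b * c) :=
    div_pos (by linarith) (mul_pos (mul_pos (by linarith) hb) hc)
  intro heq
  rw [heq] at hRlt
  linarith
end
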